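/- Let 0 < ε₀ < c. Then the map H: f ↦ (f + f̄)/2 (i.e. f ↦ Re f) maps 𝓑^ℂ([ε₀, c]) into 𝓑([−c, c]), is continuous, injective, and satisfies H ∘ σ = σ ∘ H; consequently H is an equivariant topological embedding of the shift (𝓑^ℂ([ε₀, c]), σ) into the shift (𝓑([−c, c]), σ). (Injectivity: if f, g ∈ 𝓑^ℂ([ε₀, c]) satisfy f + f̄ = g + ḡ, then f − g = conj(g − f), and since supp 𝓕(f̄) = −supp 𝓕(f), the Fourier transform of f − g is supported in [ε₀, c] ∩ [−c, −ε₀] = ∅, so f = g.) -/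

import Mathlib

open MeasureTheory Set
open scoped ENNReal NNReal

noncomputable section

/-- A bounded continuous function `f : ℝ → ℂ` is band-limited in `I` if its distributional
Fourier transform is supported in `I`, i.e. `⟨𝓕 f, g⟩ = ⟨f, 𝓕 g⟩ = 0` for every Schwartz
function `g` whose support is disjoint from `I`. -/
def BandLimitedIn (I : Set ℝ) (f : ℝ → ℂ) : Prop :=
  ∀ g : SchwartzMap ℝ ℂ, Disjoint (tsupport ⇑g) I →
    ∫ t : ℝ, f t * FourierTransform.fourier (⇑g : ℝ → ℂ) t = 0

/-- The Bernstein space `𝓑^ℂ(I)`. -/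
def BernsteinC (I : Set ℝ) : Set C(ℝ, ℂ) :=
  {f | (∀ t : ℝ, ‖f t‖ ≤ 1) ∧ BandLimitedIn I ⇑f}

/-- The real Bernstein space `𝓑(I)`. -/
def BernsteinR (I : Set ℝ) : Set C(ℝ, ℝ) :=
  {f | (∀ t : ℝ, |f t| ≤ 1) ∧ BandLimitedIn I (fun t => (f t : ℂ))}

/-- The shift `σ : g ↦ g(· + 1)`. -/
def shiftC : C(ℝ, ℂ) → C(ℝ, ℂ) := fun f => f.comp ⟨fun t => t + 1, by continuity⟩

def shiftR : C(ℝ, ℝ) → C(ℝ, ℝ) := fun f => f.comp ⟨fun t => t + 1, by continuity⟩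

/-- The metric `D(f,g) = Σ 2^{-n} ‖f-g‖_{L^∞([-n,n])}`. -/
def Dc (f g : C(ℝ, ℂ)) : ℝ :=
  ∑' n : ℕ, (1 / 2 : ℝ) ^ (n + 1) * ⨆ t : Icc (-(n + 1 : ℝ)) (n + 1 : ℝ), ‖f t.1 - g t.1‖

def Dr (f g : C(ℝ, ℝ)) : ℝ :=
  ∑' n : ℕ, (1 / 2 : ℝ) ^ (n + 1) * ⨆ t : Icc (-(n + 1 : ℝ)) (n + 1 : ℝ), |f t.1 - g t.1|

/-- Lebesgue covering dimension is at most `n`: every open cover admits an open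
refinement that still covers, of order at most `n + 1`. -/
def HasCovDimLE (X : Type*) [TopologicalSpace X] (n : ℕ) : Prop :=
  ∀ 𝒰 : Set (Set X), (∀ U ∈ 𝒰, IsOpen U) → ⋃₀ 𝒰 = Set.univ →
    ∃ 𝒱 : Set (Set X), (∀ V ∈ 𝒱, IsOpen V) ∧ ⋃₀ 𝒱 = Set.univ ∧
      (∀ V ∈ 𝒱, ∃ U ∈ 𝒰, V ⊆ U) ∧
      ∀ x : X, {V | V ∈ 𝒱 ∧ x ∈ V}.encard ≤ (n : ℕ∞) + 1

/-- Lebesgue covering dimension, valued in `ℕ∞`. -/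
def covDim (X : Type*) [TopologicalSpace X] : ℕ∞ :=
  ⨅ n ∈ {n : ℕ | HasCovDimLE X n}, (n : ℕ∞)

/-- `Widim_ε(X, d)`: the minimal covering dimension of a compact metrizable space `P`
admitting a continuous `ε`-embedding `f : X → P` with respect to `d`. -/
def Widim (X : Type u) [TopologicalSpace X] (d : X → X → ℝ) (ε : ℝ) : ℕ∞ :=
  sInf {k : ℕ∞ | ∃ (P : Type u) (tP : TopologicalSpace P),
    @CompactSpace P tP ∧ @TopologicalSpace.MetrizableSpace P tP ∧
    ∃ f : X → P, @Continuous X P _ tP f ∧ (∀ x y : X, f x = f y → d x y < ε) ∧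
      @covDim P tP = k}

/-- The dynamical metric `d_n(x,y) = max_{0 ≤ i ≤ n-1} d(T^i x, T^i y)`. -/
def dynDist {X : Type*} (T : X → X) (d : X → X → ℝ) (n : ℕ) (x y : X) : ℝ :=
  ⨆ i : Fin n, d (T^[(i : ℕ)] x) (T^[(i : ℕ)] y)

/-- Mean dimension `mdim(X,T) = lim_{ε→0} lim_{n→∞} Widim_ε(X, d_n)/n`; since
`Widim_ε(X, d_n)` is subadditive in `n` and monotone in `ε`, the iterated limit equals
`sup_{ε>0} inf_{n≥1} Widim_ε(X, d_n)/n`. -/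
def mdim {X : Type u} [TopologicalSpace X] (T : X → X) (d : X → X → ℝ) : ℝ≥0∞ :=
  ⨆ ε : {ε : ℝ // 0 < ε}, ⨅ n : ℕ+, (Widim X (dynDist T d n) ε.1 : ℝ≥0∞) / ((n : ℕ) : ℝ≥0∞)

/-- A system `(X, T)` is minimal if `X` has no nonempty proper closed `T`-invariant subset. -/
def IsMinimalSystem {X : Type*} [TopologicalSpace X] (T : X → X) : Prop :=
  ∀ Z : Set X, IsClosed Z → Z.Nonempty → T '' Z = Z → Z = Set.univ


section ReAuxiliary

open scoped FourierTransform SchwartzMap ContDiff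
open Complex MeasureTheory
open scoped ComplexConjugate

/-- Compactly supported smooth functions are Schwartz. -/
def toSchwartzCS {g : ℝ → ℂ} (h1 : ContDiff ℝ ∞ g) (h2 : HasCompactSupport g) :
    SchwartzMap ℝ ℂ where
  toFun := g
  smooth' := h1
  decay' := by
    intro k n
    have hc : Continuous fun x : ℝ => ‖x‖ ^ k * ‖iteratedFDeriv ℝ n g x‖ :=
      (continuous_norm.pow k).mul ((h1.continuous_iteratedFDeriv (by exact_mod_cast le_top)).norm)
    have h3 : HasCompactSupport fun x : ℝ => ‖x‖ ^ k * ‖iteratedFDeriv ℝ n g x‖ :=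
      ((h2.iteratedFDeriv (𝕜 := ℝ) n).norm).mul_left
    obtain ⟨C, hC⟩ := hc.bounded_above_of_compact_support h3
    exact ⟨C, fun x => le_trans (Real.le_norm_self _) (hC x)⟩

@[simp] lemma toSchwartzCS_apply {g : ℝ → ℂ} (h1 : ContDiff ℝ ∞ g) (h2 : HasCompactSupport g)
    (x : ℝ) : toSchwartzCS h1 h2 x = g x := rfl

/-- `f ↦ conj (f (-·))` on Schwartz space. -/
def conjNegS (f : SchwartzMap ℝ ℂ) : SchwartzMap ℝ ℂ :=
  SchwartzMap.bilinLeftCLM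
      ((ContinuousLinearMap.lsmul ℝ ℝ).flip.comp Complex.conjCLE.toContinuousLinearMap)
      (Function.HasTemperateGrowth.const (1 : ℝ))
    (SchwartzMap.compCLMOfContinuousLinearEquiv ℝ (ContinuousLinearEquiv.neg ℝ) f)

lemma conjNegS_apply (f : SchwartzMap ℝ ℂ) (x : ℝ) :
    conjNegS f x = conj (f (-x)) := by
  show (1 : ℝ) • conj ((SchwartzMap.compCLMOfContinuousLinearEquiv ℝ
    (ContinuousLinearEquiv.neg ℝ) f) x) = _
  rw [one_smul]
  congr 1


lemma fourier_conjNegS (g : SchwartzMap ℝ ℂ) (t : ℝ) :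
    FourierTransform.fourier (⇑(conjNegS g)) t = conj (FourierTransform.fourier (⇑g) t) := by
  have hcoe : ⇑(conjNegS g) = fun x => conj (g (-x)) := funext fun x => conjNegS_apply g x
  rw [hcoe, Real.fourier_eq', Real.fourier_eq', ← integral_conj,
    ← integral_neg_eq_self]
  congr 1
  funext v
  simp only [RCLike.inner_apply, conj_trivial, neg_neg, smul_eq_mul, map_mul, ← Complex.exp_conj,
    Complex.conj_ofReal, Complex.conj_I]
  norm_num


lemma integral_conj_mul_fourier (f : ℝ → ℂ) (g : SchwartzMap ℝ ℂ) :
    ∫ t : ℝ, conj (f t) * FourierTransform.fourier (⇑g) t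
      = conj (∫ t : ℝ, f t * FourierTransform.fourier (⇑(conjNegS g)) t) := by
  rw [← integral_conj]
  congr 1
  funext t
  rw [map_mul, fourier_conjNegS]
  simp

lemma tsupport_conjNegS_subset (g : SchwartzMap ℝ ℂ) :
    tsupport ⇑(conjNegS g) ⊆ Neg.neg ⁻¹' tsupport ⇑g := by
  have hcoe : ⇑(conjNegS g) = fun x => conj (g (-x)) := funext fun x => conjNegS_apply g x
  rw [hcoe]
  refine closure_minimal ?_ (IsClosed.preimage continuous_neg isClosed_closure)
  intro x hx
  have hgx : g (-x) ≠ 0 := by simpa [Function.mem_support] using hx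
  exact subset_closure (by simpa [Function.mem_support] using hgx)

lemma disjoint_neg_preimage {A : Set ℝ} {a b : ℝ} (h : Disjoint A (Icc (-b) (-a))) :
    Disjoint (Neg.neg ⁻¹' A) (Icc a b) := by
  refine Set.disjoint_left.2 fun x hx hx' => ?_
  exact Set.disjoint_left.1 h hx ⟨by linarith [hx'.2], by linarith [hx'.1]⟩

lemma bandLimited_conj_integral {a b : ℝ} {f : ℝ → ℂ} (hf : BandLimitedIn (Icc a b) f)
    (g : SchwartzMap ℝ ℂ) (hg : Disjoint (tsupport ⇑g) (Icc (-b) (-a))) :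
    ∫ t : ℝ, conj (f t) * FourierTransform.fourier (⇑g) t = 0 := by
  rw [integral_conj_mul_fourier, hf (conjNegS g)
    ((disjoint_neg_preimage hg).mono_left (tsupport_conjNegS_subset g)), map_zero]

lemma integrable_bdd_mul_schwartz {f : ℝ → ℂ} (hf : Continuous f) {M : ℝ} (hb : ∀ t, ‖f t‖ ≤ M)
    (ψ : SchwartzMap ℝ ℂ) : Integrable fun t : ℝ => f t * ψ t :=
  ψ.integrable.bdd_mul hf.aestronglyMeasurable (Filter.Eventually.of_forall hb)

lemma integrable_bdd_mul_fourier {f : ℝ → ℂ} (hf : Continuous f) {M : ℝ} (hb : ∀ t, ‖f t‖ ≤ M)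
    (g : SchwartzMap ℝ ℂ) : Integrable fun t : ℝ => f t * FourierTransform.fourier (⇑g) t :=
  integrable_bdd_mul_schwartz hf hb (SchwartzMap.fourierTransformCLM ℝ g)

end ReAuxiliary

open Complex MeasureTheory
open scoped ComplexConjugate ContDiff

/-- The map `H(f) = (f + conj f)/2 = Re f`, from complex to real continuous functions. -/
def Hre : C(ℝ, ℂ) → C(ℝ, ℝ) :=
  fun f => ⟨fun t => (f t).re, Complex.continuous_re.comp f.continuous⟩

/-- For `0 < ε₀ < c`, the map `H : f ↦ (f + conj f)/2 = Re f` maps `𝓑^ℂ([ε₀, c])` into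
`𝓑([-c, c])`, is continuous, injective on `𝓑^ℂ([ε₀, c])` and commutes with the shifts;
hence it is an equivariant topological embedding of `(𝓑^ℂ([ε₀, c]), σ)` into
`(𝓑([-c, c]), σ)`. -/
theorem re_embedding_Bernstein (ε₀ c : ℝ) (hε₀ : 0 < ε₀) (hc : ε₀ < c) :
    Set.MapsTo Hre (BernsteinC (Icc ε₀ c)) (BernsteinR (Icc (-c) c)) ∧
    ContinuousOn Hre (BernsteinC (Icc ε₀ c)) ∧
    Set.InjOn Hre (BernsteinC (Icc ε₀ c)) ∧
    (∀ f : C(ℝ, ℂ), Hre (shiftC f) = shiftR (Hre f)) := by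
  have hIccSub : Icc ε₀ c ⊆ Icc (-c) c := Icc_subset_Icc (by linarith) le_rfl
  have hIccSub2 : Icc (-c) (-ε₀) ⊆ Icc (-c) c := Icc_subset_Icc le_rfl (by linarith)
  refine ⟨?_, ?_, ?_, fun f => rfl⟩
  · -- MapsTo
    rintro f ⟨hfb, hfl⟩
    refine ⟨fun t => ?_, ?_⟩
    · calc |(Hre f) t| = |(f t).re| := rfl
        _ ≤ ‖f t‖ := Complex.abs_re_le_norm _
        _ ≤ 1 := hfb t
    · intro g hg
      have h1 : ∫ t : ℝ, f t * FourierTransform.fourier (⇑g) t = 0 :=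
        hfl g (hg.mono_right hIccSub)
      have h2 : ∫ t : ℝ, conj (f t) * FourierTransform.fourier (⇑g) t = 0 :=
        bandLimited_conj_integral hfl g (hg.mono_right hIccSub2)
      have hint1 := integrable_bdd_mul_fourier f.continuous hfb g
      have hfcb : ∀ t, ‖conj (f t)‖ ≤ 1 := fun t => by simpa using hfb t
      have hint2 : Integrable (fun t : ℝ => conj (f t) * FourierTransform.fourier (⇑g) t) :=
        integrable_bdd_mul_fourier (f := fun t => conj (f t))
          (Complex.continuous_conj.comp f.continuous) hfcb g
      have key : (fun t : ℝ => ((Hre f) t : ℂ) * FourierTransform.fourier (⇑g) t)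
          = fun t => (2⁻¹ : ℂ) * (f t * FourierTransform.fourier (⇑g) t)
            + (2⁻¹ : ℂ) * (conj (f t) * FourierTransform.fourier (⇑g) t) := by
        funext t
        have h3 : ((f t).re : ℂ) = (f t + conj (f t)) / 2 := by
          rw [Complex.add_conj]; push_cast; ring
        show ((f t).re : ℂ) * _ = _
        rw [h3]; ring
      rw [key, integral_add (hint1.const_mul _) (hint2.const_mul _),
        integral_const_mul, integral_const_mul, h1, h2]
      simp
  · -- continuity
    have hH : Hre = fun f : C(ℝ, ℂ) =>
        (⟨Complex.re, Complex.continuous_re⟩ : C(ℂ, ℝ)).comp f := rfl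
    rw [hH]
    exact (ContinuousMap.continuous_postcomp _).continuousOn
  · -- injectivity
    rintro f ⟨hfb, hfl⟩ g ⟨hgb, hgl⟩ hfg
    have hre : ∀ t, (f t).re = (g t).re := fun t => ContinuousMap.congr_fun hfg t
    set u : ℝ → ℂ := fun t => f t - g t with hu
    have hu_cont : Continuous u := f.continuous.sub g.continuous
    have hub : ∀ t, ‖u t‖ ≤ 2 := fun t =>
      le_trans (norm_sub_le _ _) (by linarith [hfb t, hgb t])
    have hconj : ∀ t, conj (u t) = - u t := by
      intro t
      have h0 : (u t).re = 0 := by simp [hu, Complex.sub_re, hre t]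
      apply Complex.ext <;> simp [h0]
    have hBL : ∀ ψ : SchwartzMap ℝ ℂ, Disjoint (tsupport ⇑ψ) (Icc ε₀ c) →
        ∫ t : ℝ, u t * FourierTransform.fourier (⇑ψ) t = 0 := by
      intro ψ hψ
      have e : (fun t : ℝ => u t * FourierTransform.fourier (⇑ψ) t)
          = fun t => f t * FourierTransform.fourier (⇑ψ) t - g t * FourierTransform.fourier (⇑ψ) t := by
        funext t; simp [hu, sub_mul]
      rw [e, integral_sub (integrable_bdd_mul_fourier f.continuous hfb ψ)
        (integrable_bdd_mul_fourier g.continuous hgb ψ), hfl ψ hψ, hgl ψ hψ, sub_zero]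
    have hBL2 : ∀ ψ : SchwartzMap ℝ ℂ, Disjoint (tsupport ⇑ψ) (Icc (-c) (-ε₀)) →
        ∫ t : ℝ, u t * FourierTransform.fourier (⇑ψ) t = 0 := by
      intro ψ hψ
      have hc2 : ∫ t : ℝ, conj (u t) * FourierTransform.fourier (⇑ψ) t = 0 := by
        rw [integral_conj_mul_fourier, hBL (conjNegS ψ)
          (((disjoint_neg_preimage (by simpa using hψ)).mono_left
            (tsupport_conjNegS_subset ψ))), map_zero]
      calc ∫ t : ℝ, u t * FourierTransform.fourier (⇑ψ) t
          = - ∫ t : ℝ, conj (u t) * FourierTransform.fourier (⇑ψ) t := by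
            rw [← integral_neg]; congr 1; funext t; rw [hconj t]; ring
        _ = 0 := by rw [hc2, neg_zero]
    have hAll : ∀ ψ : SchwartzMap ℝ ℂ, ∫ t : ℝ, u t * ψ t = 0 := by
      intro ψ
      set g0 : SchwartzMap ℝ ℂ := (SchwartzMap.fourierTransformCLE ℝ (SchwartzMap ℝ ℂ)).symm ψ with hg0
      have hψg0 : ⇑ψ = FourierTransform.fourier ⇑g0 := by
        conv_lhs => rw [← (SchwartzMap.fourierTransformCLE ℝ (SchwartzMap ℝ ℂ)).apply_symm_apply ψ]
        rfl
      set m : ℝ := (ε₀ + c) / 2 with hm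
      set φ : ContDiffBump m := ⟨(c - ε₀)/2 + ε₀/4, (c - ε₀)/2 + ε₀/2, by linarith, by linarith⟩
        with hφ
      have g1smooth : ContDiff ℝ (⊤ : ℕ∞) (fun x : ℝ => φ x • g0 x) :=
        (φ.contDiff).smul (g0.smooth ⊤)
      have g1cs : HasCompactSupport (fun x : ℝ => φ x • g0 x) :=
        φ.hasCompactSupport.smul_right
      set g1 : SchwartzMap ℝ ℂ := toSchwartzCS (by exact_mod_cast g1smooth) g1cs with hg1
      set g2 : SchwartzMap ℝ ℂ := g0 - g1 with hg2
      have hsupp1 : Disjoint (tsupport ⇑g1) (Icc (-c) (-ε₀)) := by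
        have hsub : tsupport ⇑g1 ⊆ Icc (m - φ.rOut) (m + φ.rOut) := by
          have : tsupport ⇑g1 ⊆ tsupport ⇑φ :=
            closure_mono (Function.support_smul_subset_left ⇑φ ⇑g0)
          rwa [φ.tsupport_eq, Real.closedBall_eq_Icc] at this
        refine Set.disjoint_left.2 fun x hx hx' => ?_
        have h1 := (hsub hx).1
        have h2 := hx'.2
        have : m - φ.rOut = ε₀ / 2 := by
          show (ε₀ + c) / 2 - ((c - ε₀) / 2 + ε₀ / 2) = ε₀ / 2; ring
        rw [this] at h1
        linarith
      have hsupp2 : Disjoint (tsupport ⇑g2) (Icc ε₀ c) := by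
        have hzero : ∀ x ∈ Metric.ball m φ.rIn, (⇑g2) x = 0 := by
          intro x hx
          have h1 : φ x = 1 := φ.one_of_mem_closedBall (Metric.ball_subset_closedBall hx)
          show g0 x - g1 x = 0
          rw [hg1]
          show g0 x - φ x • g0 x = 0
          rw [h1, one_smul, sub_self]
        have hsub : tsupport ⇑g2 ⊆ (Metric.ball m φ.rIn)ᶜ := by
          refine closure_minimal ?_ Metric.isOpen_ball.isClosed_compl
          intro x hx hmem
          exact hx (hzero x hmem)
        have hball : Icc ε₀ c ⊆ Metric.ball m φ.rIn := by
          intro x hx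
          rw [Metric.mem_ball, Real.dist_eq, abs_sub_lt_iff]
          constructor
          · show x - (ε₀ + c) / 2 < (c - ε₀) / 2 + ε₀ / 4; linarith [hx.2]
          · show (ε₀ + c) / 2 - x < (c - ε₀) / 2 + ε₀ / 4; linarith [hx.1]
        exact Set.disjoint_left.2 fun x hx hx' => (hsub hx) (hball hx')
      have hg0eq : g0 = g1 + g2 := by rw [hg2]; abel
      have hsplit : ∀ t : ℝ, FourierTransform.fourier ⇑g0 t
          = FourierTransform.fourier ⇑g1 t + FourierTransform.fourier ⇑g2 t := by
        intro t
        have h1 : SchwartzMap.fourierTransformCLM ℝ g0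
            = SchwartzMap.fourierTransformCLM ℝ g1 + SchwartzMap.fourierTransformCLM ℝ g2 := by
          rw [hg0eq, map_add]
        have h2 := congrArg (fun h : SchwartzMap ℝ ℂ => h t) h1
        simpa [SchwartzMap.add_apply, SchwartzMap.fourier_coe] using h2
      calc ∫ t : ℝ, u t * ψ t = ∫ t : ℝ, u t * FourierTransform.fourier ⇑g0 t := by rw [hψg0]
        _ = ∫ t : ℝ, (u t * FourierTransform.fourier ⇑g1 t + u t * FourierTransform.fourier ⇑g2 t) := by
            congr 1; funext t; rw [hsplit t]; ring
        _ = 0 := by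
            rw [integral_add (integrable_bdd_mul_fourier hu_cont hub g1)
              (integrable_bdd_mul_fourier hu_cont hub g2), hBL2 g1 hsupp1, hBL g2 hsupp2, add_zero]
    have huzero : u = 0 := by
      have hae : ∀ᵐ x : ℝ, u x = 0 := by
        refine ae_eq_zero_of_integral_contDiff_smul_eq_zero
          (hu_cont.locallyIntegrable) fun ρ hρs hρc => ?_
        have hρs' : ContDiff ℝ (⊤ : ℕ∞) fun x : ℝ => ((ρ x : ℂ)) :=
          Complex.ofRealCLM.contDiff.comp (by exact_mod_cast hρs)
        have hρc' : HasCompactSupport fun x : ℝ => ((ρ x : ℂ)) :=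
          hρc.comp_left (g := fun r : ℝ => (r : ℂ)) (by simp)
        have := hAll (toSchwartzCS (by exact_mod_cast hρs') hρc')
        simp only [toSchwartzCS_apply] at this
        rw [← this]
        congr 1; funext x
        rw [Complex.real_smul]; ring
      exact (hu_cont.ae_eq_iff_eq (μ := volume) continuous_const).1 hae
    ext t
    have := congrFun huzero t
    simpa [hu, sub_eq_zero] using this

end
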